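/- Let V be a finite set, let (Y_v)_{v∈V} be independent random variables each taking values in {0,1}, and let P be a d-homogeneous multilinear polynomial on ℝ^V. Then E|P(Y) − E P(Y)| ≤ 2 (Σ_{v∈V} c_v(P)²)^{1/2} = 2‖P‖₂. -/

import Mathlib

open MeasureTheory Finset

noncomputable section

/-- Real value of a Boolean state. -/
def b2r (b : Bool) : ℝ := if b then 1 else 0

/-- Value of the `d`-homogeneous multilinear polynomial with coefficients
`Q W` (over `d`-element subsets `W` of `V`) at the point `y`. -/
def polyVal {V : Type} [Fintype V] [DecidableEq V] (d : ℕ) (Q : Finset V → ℝ)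
    (y : V → ℝ) : ℝ :=
  ∑ W ∈ Finset.powersetCard d (Finset.univ : Finset V), Q W * ∏ w ∈ W, y w

/-- `c_v(P) = ∑_{W : v ∈ W} |P_W|`. -/
def cCoeff {V : Type} [Fintype V] [DecidableEq V] (d : ℕ) (Q : Finset V → ℝ)
    (v : V) : ℝ :=
  ∑ W ∈ (Finset.powersetCard d (Finset.univ : Finset V)).filter (fun W => v ∈ W), |Q W|

/-- **McDiarmid-type L¹ bound**: if `(Y_v)_{v ∈ V}` are independent `{0,1}`-valued
random variables and `P` is a `d`-homogeneous multilinear polynomial, then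
`E|P(Y) − E P(Y)| ≤ 2 ‖P‖₂`. -/
theorem mcdiarmid_l1_bound
    {V : Type} [Fintype V] [DecidableEq V]
    {Ω : Type} [MeasurableSpace Ω] (μ : Measure Ω) [IsProbabilityMeasure μ]
    (Y : V → Ω → Bool)
    (hmeas : ∀ v, Measurable (Y v))
    (hindep : ProbabilityTheory.iIndepFun Y μ)
    (d : ℕ) (hd : 1 ≤ d) (Q : Finset V → ℝ) :
    ∫ ω, |polyVal d Q (fun v => b2r (Y v ω))
          - ∫ ω', polyVal d Q (fun v => b2r (Y v ω')) ∂ μ| ∂ μ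
      ≤ 2 * Real.sqrt (∑ v, cCoeff d Q v ^ 2) := by
  classical
  set S := Finset.powersetCard d (Finset.univ : Finset V) with hS
  set f : V → Ω → ℝ := fun v ω => b2r (Y v ω) with hfdef
  have hf_meas : ∀ v, Measurable (f v) := fun v =>
    (Measurable.of_discrete (f := b2r)).comp (hmeas v)
  have hf0 : ∀ v ω, 0 ≤ f v ω := by
    intro v ω; simp only [hfdef, b2r]; split <;> norm_num
  have hf1 : ∀ v ω, f v ω ≤ 1 := by
    intro v ω; simp only [hfdef, b2r]; split <;> norm_num
  -- the monomials
  set Z : Finset V → Ω → ℝ := fun W ω => ∏ w ∈ W, f w ω with hZdef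
  have hZ_meas : ∀ W, Measurable (Z W) := fun W =>
    Finset.measurable_prod _ fun w _ => hf_meas w
  have hZ0 : ∀ W ω, 0 ≤ Z W ω := fun W ω => Finset.prod_nonneg fun w _ => hf0 w ω
  have hZ1 : ∀ W ω, Z W ω ≤ 1 := fun W ω =>
    Finset.prod_le_one (fun w _ => hf0 w ω) fun w _ => hf1 w ω
  have int_of_bound : ∀ (h : Ω → ℝ) (C : ℝ), Measurable h → (∀ ω, |h ω| ≤ C) →
      Integrable h μ := by
    intro h C hm hb
    refine (integrable_const C).mono' hm.aestronglyMeasurable ?_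
    filter_upwards with ω
    rw [Real.norm_eq_abs]; exact hb ω
  have hZ_int : ∀ W, Integrable (Z W) μ := fun W =>
    int_of_bound _ 1 (hZ_meas W) fun ω => by
      rw [abs_of_nonneg (hZ0 W ω)]; exact hZ1 W ω
  -- expectations of monomials
  set I : Finset V → ℝ := fun W => ∫ ω, Z W ω ∂μ with hIdef
  have hI0 : ∀ W, 0 ≤ I W := fun W => integral_nonneg fun ω => hZ0 W ω
  have hI1 : ∀ W, I W ≤ 1 := by
    intro W
    have h := integral_mono (μ := μ) (hZ_int W) (integrable_const 1) (fun ω => hZ1 W ω)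
    simpa using h
  -- centered monomials
  set g : Finset V → Ω → ℝ := fun W ω => Z W ω - I W with hgdef
  have hg_meas : ∀ W, Measurable (g W) := fun W => (hZ_meas W).sub measurable_const
  have hg_bd : ∀ W ω, |g W ω| ≤ 1 := by
    intro W ω
    rw [abs_le]
    constructor
    · have := hZ0 W ω; have := hI1 W; simp only [hgdef]; linarith
    · have := hZ1 W ω; have := hI0 W; simp only [hgdef]; linarith
  have hg_int : ∀ W, Integrable (g W) μ := fun W => int_of_bound _ 1 (hg_meas W) (hg_bd W)
  have hg_mean : ∀ W, ∫ ω, g W ω ∂μ = 0 := by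
    intro W
    simp only [hgdef]
    rw [integral_sub (hZ_int W) (integrable_const _), integral_const]
    simp [hIdef]
  -- independence of the real-valued family
  have hf_indep : ProbabilityTheory.iIndepFun
      f μ := hindep.comp (fun _ => b2r) fun _ => Measurable.of_discrete
  -- for disjoint W, W', the centered monomials are independent
  have hcov0 : ∀ W W' : Finset V, Disjoint W W' → ∫ ω, g W ω * g W' ω ∂μ = 0 := by
    intro W W' hWW'
    have hind1 : ProbabilityTheory.IndepFun (Z W) (Z W') μ := by
      have h1 := hf_indep.indepFun_finset W W' hWW' hf_meas
      have h2 := h1.comp (φ := fun (v : (_ : W) → ℝ) => ∏ i, v i)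
        (ψ := fun (v : (_ : W') → ℝ) => ∏ i, v i)
        (Finset.measurable_prod _ fun i _ => measurable_pi_apply i)
        (Finset.measurable_prod _ fun i _ => measurable_pi_apply i)
      have e1 : (fun (v : (_ : W) → ℝ) => ∏ i, v i) ∘ (fun a (i : W) => f i a) = Z W := by
        funext a
        simp only [Function.comp_apply, hZdef]
        exact Finset.prod_coe_sort W (fun w => f w a)
      have e2 : (fun (v : (_ : W') → ℝ) => ∏ i, v i) ∘ (fun a (i : W') => f i a) = Z W' := by
        funext a
        simp only [Function.comp_apply, hZdef]
        exact Finset.prod_coe_sort W' (fun w => f w a)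
      rwa [e1, e2] at h2
    have hind : ProbabilityTheory.IndepFun (g W) (g W') μ := by
      have := hind1.comp (φ := fun x : ℝ => x - I W) (ψ := fun x : ℝ => x - I W')
        (measurable_id.sub measurable_const) (measurable_id.sub measurable_const)
      exact this
    rw [ProbabilityTheory.IndepFun.integral_fun_mul_eq_mul_integral hind (hg_meas W).aestronglyMeasurable (hg_meas W').aestronglyMeasurable,
      hg_mean, hg_mean, mul_zero]
  -- covariance bound
  have hgg_bd : ∀ (W W' : Finset V) (ω : Ω), |g W ω * g W' ω| ≤ 1 := by
    intro W W' ω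
    rw [abs_mul]
    exact mul_le_one₀ (hg_bd W ω) (abs_nonneg _) (hg_bd W' ω)
  have hgg_int : ∀ W W' : Finset V, Integrable (fun ω => g W ω * g W' ω) μ := by
    intro W W'
    exact int_of_bound _ 1 ((hg_meas W).mul (hg_meas W')) fun ω => hgg_bd W W' ω
  have hcov_bd : ∀ W W' : Finset V, |∫ ω, g W ω * g W' ω ∂μ| ≤ 1 := by
    intro W W'
    have h1 : |∫ ω, g W ω * g W' ω ∂μ| ≤ ∫ ω, |g W ω * g W' ω| ∂μ := by
      simpa only [Real.norm_eq_abs] using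
        norm_integral_le_integral_norm (μ := μ) (fun ω => g W ω * g W' ω)
    have h2 : ∫ ω, |g W ω * g W' ω| ∂μ ≤ ∫ _, (1:ℝ) ∂μ :=
      integral_mono (hgg_int W W').abs (integrable_const 1) fun ω => hgg_bd W W' ω
    simpa using h1.trans h2
  -- the random variable and its centered version
  set X : Ω → ℝ := fun ω => ∑ W ∈ S, Q W * Z W ω with hXdef
  have hX_eq : ∀ ω, polyVal d Q (fun v => b2r (Y v ω)) = X ω := fun ω => rfl
  set G : Ω → ℝ := fun ω => ∑ W ∈ S, Q W * g W ω with hGdef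
  have hG_meas : Measurable G := Finset.measurable_sum _ fun W _ =>
    measurable_const.mul (hg_meas W)
  set C : ℝ := ∑ W ∈ S, |Q W| with hCdef
  have hG_bd : ∀ ω, |G ω| ≤ C := by
    intro ω
    calc |G ω| ≤ ∑ W ∈ S, |Q W * g W ω| := Finset.abs_sum_le_sum_abs _ _
    _ ≤ ∑ W ∈ S, |Q W| := by
        refine Finset.sum_le_sum fun W _ => ?_
        rw [abs_mul]
        calc |Q W| * |g W ω| ≤ |Q W| * 1 :=
          mul_le_mul_of_nonneg_left (hg_bd W ω) (abs_nonneg _)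
        _ = |Q W| := mul_one _
  have hG_int : Integrable G μ := int_of_bound _ C hG_meas hG_bd
  have hX_int : Integrable X μ := by
    refine integrable_finset_sum _ fun W _ => ?_
    exact (hZ_int W).const_mul _
  have hEX : ∫ ω, X ω ∂μ = ∑ W ∈ S, Q W * I W := by
    rw [integral_finset_sum _ fun W _ => (hZ_int W).const_mul _]
    refine Finset.sum_congr rfl fun W _ => ?_
    rw [integral_const_mul]
  have hG_eq : ∀ ω, G ω = X ω - ∫ ω', X ω' ∂μ := by
    intro ω
    rw [hEX]
    simp only [hGdef, hgdef, hXdef, mul_sub]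
    rw [Finset.sum_sub_distrib]
  -- second moment of G
  have hGsq_int : Integrable (fun ω => G ω ^ 2) μ := by
    refine int_of_bound _ (C ^ 2) (hG_meas.pow_const 2) fun ω => ?_
    show |G ω ^ 2| ≤ C ^ 2
    rw [abs_pow]
    exact pow_le_pow_left₀ (abs_nonneg _) (hG_bd ω) 2
  set B : ℝ := ∫ ω, G ω ^ 2 ∂μ with hBdef
  -- compute/bound the second moment
  have hBle : B ≤ ∑ v, cCoeff d Q v ^ 2 := by
    have hexp : B = ∑ W ∈ S, ∑ W' ∈ S, Q W * Q W' * ∫ ω, g W ω * g W' ω ∂μ := by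
      have hpt : ∀ ω, G ω ^ 2 = ∑ W ∈ S, ∑ W' ∈ S, Q W * Q W' * (g W ω * g W' ω) := by
        intro ω
        rw [pow_two]
        simp only [hGdef]
        rw [Finset.sum_mul_sum]
        refine Finset.sum_congr rfl fun W _ => Finset.sum_congr rfl fun W' _ => by ring
      rw [hBdef]
      calc ∫ ω, G ω ^ 2 ∂μ
          = ∫ ω, ∑ W ∈ S, ∑ W' ∈ S, Q W * Q W' * (g W ω * g W' ω) ∂μ := by
            exact integral_congr_ae (Filter.Eventually.of_forall hpt)
      _ = ∑ W ∈ S, ∑ W' ∈ S, Q W * Q W' * ∫ ω, g W ω * g W' ω ∂μ := by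
            rw [integral_finset_sum _ fun W _ => ?_]
            · refine Finset.sum_congr rfl fun W _ => ?_
              rw [integral_finset_sum _ fun W' _ => ?_]
              · exact Finset.sum_congr rfl fun W' _ => integral_const_mul _ _
              · exact (hgg_int W W').const_mul _
            · exact integrable_finset_sum _ fun W' _ => (hgg_int W W').const_mul _
    have hrhs : ∑ v, cCoeff d Q v ^ 2
        = ∑ W ∈ S, ∑ W' ∈ S, ((W ∩ W').card : ℝ) * (|Q W| * |Q W'|) := by
      have hc : ∀ v, cCoeff d Q v = ∑ W ∈ S, if v ∈ W then |Q W| else 0 := by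
        intro v
        rw [cCoeff, Finset.sum_filter]
      calc ∑ v, cCoeff d Q v ^ 2
          = ∑ v, ∑ W ∈ S, ∑ W' ∈ S,
              if v ∈ W ∩ W' then |Q W| * |Q W'| else 0 := by
            refine Finset.sum_congr rfl fun v _ => ?_
            rw [pow_two]
            rw [hc v]
            rw [Finset.sum_mul_sum]
            refine Finset.sum_congr rfl fun W _ => Finset.sum_congr rfl fun W' _ => ?_
            by_cases h1 : v ∈ W <;> by_cases h2 : v ∈ W' <;>
              simp [Finset.mem_inter, h1, h2]
      _ = ∑ W ∈ S, ∑ W' ∈ S, ∑ v,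
              if v ∈ W ∩ W' then |Q W| * |Q W'| else 0 := by
            rw [Finset.sum_comm]
            refine Finset.sum_congr rfl fun W _ => Finset.sum_comm
      _ = ∑ W ∈ S, ∑ W' ∈ S, ((W ∩ W').card : ℝ) * (|Q W| * |Q W'|) := by
            refine Finset.sum_congr rfl fun W _ => Finset.sum_congr rfl fun W' _ => ?_
            rw [Finset.sum_ite_mem, Finset.univ_inter, Finset.sum_const, nsmul_eq_mul]
    rw [hexp, hrhs]
    refine Finset.sum_le_sum fun W _ => Finset.sum_le_sum fun W' _ => ?_
    by_cases hdisj : Disjoint W W'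
    · rw [hcov0 W W' hdisj, mul_zero]
      positivity
    · have hcard : 1 ≤ ((W ∩ W').card : ℝ) := by
        have : (W ∩ W').Nonempty := Finset.not_disjoint_iff_nonempty_inter.mp hdisj
        exact_mod_cast Finset.card_pos.mpr this
      calc Q W * Q W' * ∫ ω, g W ω * g W' ω ∂μ
          ≤ |Q W * Q W' * ∫ ω, g W ω * g W' ω ∂μ| := le_abs_self _
      _ = |Q W| * |Q W'| * |∫ ω, g W ω * g W' ω ∂μ| := by rw [abs_mul, abs_mul]
      _ ≤ |Q W| * |Q W'| * 1 :=
          mul_le_mul_of_nonneg_left (hcov_bd W W') (by positivity)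
      _ = 1 * (|Q W| * |Q W'|) := by ring
      _ ≤ ((W ∩ W').card : ℝ) * (|Q W| * |Q W'|) :=
          mul_le_mul_of_nonneg_right hcard (by positivity)
  -- Cauchy–Schwarz: (∫ |G|)² ≤ ∫ G²
  set A : ℝ := ∫ ω, |G ω| ∂μ with hAdef
  have hA0 : 0 ≤ A := integral_nonneg fun ω => abs_nonneg _
  have hAbs_int : Integrable (fun ω => |G ω|) μ := hG_int.abs
  have hCS : A ^ 2 ≤ B := by
    have hnn : 0 ≤ ∫ ω, (|G ω| - A) ^ 2 ∂μ := integral_nonneg fun ω => sq_nonneg _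
    have hexp : ∫ ω, (|G ω| - A) ^ 2 ∂μ = B - A ^ 2 := by
      have hpt : ∀ ω, (|G ω| - A) ^ 2 = G ω ^ 2 - 2 * A * |G ω| + A ^ 2 := by
        intro ω
        have : |G ω| ^ 2 = G ω ^ 2 := sq_abs _
        nlinarith [sq_abs (G ω)]
      calc ∫ ω, (|G ω| - A) ^ 2 ∂μ
          = ∫ ω, (G ω ^ 2 - 2 * A * |G ω| + A ^ 2) ∂μ :=
            integral_congr_ae (Filter.Eventually.of_forall hpt)
      _ = (∫ ω, (G ω ^ 2 - 2 * A * |G ω|) ∂μ) + ∫ _, A ^ 2 ∂μ := by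
            have hint1 : Integrable (fun ω => G ω ^ 2 - 2 * A * |G ω|) μ := by
              have := (hAbs_int.const_mul (2 * A))
              exact hGsq_int.sub this
            exact integral_add hint1 (integrable_const _)
      _ = B - 2 * A * A + A ^ 2 := by
            have e2 : ∫ ω, (G ω ^ 2 - 2 * A * |G ω|) ∂μ
                = (∫ ω, G ω ^ 2 ∂μ) - ∫ ω, 2 * A * |G ω| ∂μ :=
              integral_sub hGsq_int (hAbs_int.const_mul _)
            have e3 : ∫ ω, 2 * A * |G ω| ∂μ = 2 * A * A := by
              rw [integral_const_mul, ← hAdef]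
            have e4 : ∫ _ : Ω, A ^ 2 ∂μ = A ^ 2 := by simp
            rw [e2, e3, e4, ← hBdef]
      _ = B - A ^ 2 := by ring
    linarith [hexp ▸ hnn]
  -- conclude
  have hsum0 : (0:ℝ) ≤ ∑ v, cCoeff d Q v ^ 2 :=
    Finset.sum_nonneg fun v _ => sq_nonneg _
  have hA_le : A ≤ Real.sqrt (∑ v, cCoeff d Q v ^ 2) := by
    rw [Real.le_sqrt hA0 hsum0]
    exact hCS.trans hBle
  have hgoal : ∫ ω, |polyVal d Q (fun v => b2r (Y v ω))
      - ∫ ω', polyVal d Q (fun v => b2r (Y v ω')) ∂ μ| ∂ μ = A := by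
    rw [hAdef]
    refine integral_congr_ae (Filter.Eventually.of_forall fun ω => ?_)
    show |X ω - ∫ ω', X ω' ∂ μ| = |G ω|
    rw [hG_eq ω]
  rw [hgoal]
  have hs0 : 0 ≤ Real.sqrt (∑ v, cCoeff d Q v ^ 2) := Real.sqrt_nonneg _
  linarith
end
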